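/- Let G1 and G2 be connected graphs with V(G1) ∩ V(G2) = {v}, and let G be their union. Then the minimum number of edges of a 2-edge-connected spanning multi-subgraph of G equals the sum of the corresponding minima for G1 and G2. -/

import Mathlib

open Finset
open scoped Classical

/-- A multigraph on vertex type `V` with edge index type `E`, no loops. -/
structure MGraph (V E : Type) where
  ends : E → Sym2 V
  not_loop : ∀ e, ¬ (ends e).IsDiag

namespace MGraph

variable {V E : Type} [Fintype V] [Fintype E] [DecidableEq V] [DecidableEq E]

/-- Reachability in the multi-subgraph of `2G` given by multiplicities `m`. -/
def Reach (G : MGraph V E) (m : E → ℕ) : V → V → Prop :=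
  Relation.ReflTransGen (fun a b => ∃ e, 1 ≤ m e ∧ G.ends e = s(a, b))

/-- The multi-subgraph given by multiplicities `m` is spanning and connected. -/
def Conn (G : MGraph V E) (m : E → ℕ) : Prop := ∀ u v : V, G.Reach m u v

/-- Degree of `v` in the multi-subgraph with multiplicities `m`. -/
noncomputable def deg (G : MGraph V E) (m : E → ℕ) (v : V) : ℕ :=
  ∑ e, if v ∈ G.ends e then m e else 0

/-- Number of edges (with multiplicity). -/
def size (m : E → ℕ) : ℕ := ∑ e, m e

/-- `m` is a multi-subgraph of `2G`. -/
def Sub2 (m : E → ℕ) : Prop := ∀ e, m e ≤ 2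

/-- The multi-subgraph `m` is 2-edge-connected: at least two vertices, connected,
and still connected after removing any one edge copy. -/
def TwoEC (G : MGraph V E) (m : E → ℕ) : Prop :=
  2 ≤ Fintype.card V ∧ G.Conn m ∧
    ∀ e, 1 ≤ m e → G.Conn (Function.update m e (m e - 1))

/-- A tour of `G`: a spanning connected multi-subgraph of `2G` with all degrees even. -/
def IsTour (G : MGraph V E) (m : E → ℕ) : Prop :=
  Sub2 m ∧ G.Conn m ∧ ∀ v, Even (G.deg m v)

/-- A connected-`T`-join of `G`: a `T`-join in `2G` that is spanning and connected. -/
def IsConnTJoin (G : MGraph V E) (T : Finset V) (m : E → ℕ) : Prop :=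
  Sub2 m ∧ G.Conn m ∧ ∀ v, (v ∈ T ↔ Odd (G.deg m v))

/-- `G` itself is connected. -/
def Connected (G : MGraph V E) : Prop := G.Conn (fun _ => 1)

/-- `G` itself is 2-edge-connected. -/
def TwoEdgeConnected (G : MGraph V E) : Prop := G.TwoEC (fun _ => 1)

/-- The minimum size of a 2-edge-connected spanning multi-subgraph of the subgraph
of `G` with vertex set `A` and edge set `Es`. -/
noncomputable def opt2ECrel (G : MGraph V E) (A : Finset V) (Es : Finset E) : ℕ :=
  sInf {n | ∃ m : E → ℕ, Sub2 m ∧ (∀ e ∉ Es, m e = 0) ∧ 2 ≤ A.card ∧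
    (∀ u ∈ A, ∀ v ∈ A, G.Reach m u v) ∧
    (∀ e, 1 ≤ m e → ∀ u ∈ A, ∀ v ∈ A, G.Reach (Function.update m e (m e - 1)) u v) ∧
    size m = n}

section Aux

variable {V E : Type} [Fintype V] [Fintype E] [DecidableEq V] [DecidableEq E]

lemma reach_mono (G : MGraph V E) {m m' : E → ℕ} (h : ∀ e, m e ≤ m' e)
    {u w : V} (hr : G.Reach m u w) : G.Reach m' u w :=
  Relation.ReflTransGen.mono (fun a b (hab : ∃ e, 1 ≤ m e ∧ G.ends e = s(a, b)) =>
    (let ⟨e, he, hend⟩ := hab; ⟨e, he.trans (h e), hend⟩ : ∃ e, 1 ≤ m' e ∧ G.ends e = s(a, b))) _ _ hr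

lemma reach_project (G : MGraph V E) {V1 V2 : Finset V} {E1 : Finset E} {v : V}
    (hVi : V1 ∩ V2 = {v})
    (hE1 : ∀ e ∈ E1, ∀ x ∈ G.ends e, x ∈ V1)
    (hE2 : ∀ e, e ∉ E1 → ∀ x ∈ G.ends e, x ∈ V2)
    (m : E → ℕ) {u w : V} (hr : G.Reach m u w) (hw : w ∈ V1) :
    (u ∈ V1 → G.Reach (fun e => if e ∈ E1 then m e else 0) u w) ∧
    (u ∉ V1 → G.Reach (fun e => if e ∈ E1 then m e else 0) v w) := by
  induction hr using Relation.ReflTransGen.head_induction_on with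
  | refl => exact ⟨fun _ => .refl, fun h => absurd hw h⟩
  | head hstep htail ih =>
      obtain ⟨e, hme, hend⟩ := hstep
      rename_i a c
      by_cases he : e ∈ E1
      · have ha : a ∈ V1 := hE1 e he a (by rw [hend]; exact Sym2.mem_mk_left a c)
        have hc : c ∈ V1 := hE1 e he c (by rw [hend]; exact Sym2.mem_mk_right a c)
        refine ⟨fun _ => ?_, fun h => absurd ha h⟩
        exact Relation.ReflTransGen.head ⟨e, by simpa [he] using hme, hend⟩ (ih.1 hc)
      · have ha2 : a ∈ V2 := hE2 e he a (by rw [hend]; exact Sym2.mem_mk_left a c)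
        have hc2 : c ∈ V2 := hE2 e he c (by rw [hend]; exact Sym2.mem_mk_right a c)
        have hvw : G.Reach (fun e => if e ∈ E1 then m e else 0) v w := by
          by_cases hc : c ∈ V1
          · have hcv : c = v := by
              have h3 := Finset.mem_inter.mpr ⟨hc, hc2⟩
              rw [hVi] at h3; exact Finset.mem_singleton.mp h3
            exact hcv ▸ ih.1 hc
          · exact ih.2 hc
        refine ⟨fun ha1 => ?_, fun _ => hvw⟩
        have hav : a = v := by
          have h3 := Finset.mem_inter.mpr ⟨ha1, ha2⟩
          rw [hVi] at h3; exact Finset.mem_singleton.mp h3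
        exact hav ▸ hvw

end Aux
set_option maxHeartbeats 1000000 in
theorem _root_.Graph.stmt_3 {V E : Type} [Fintype V] [Fintype E] [DecidableEq V] [DecidableEq E]
    (G : MGraph V E) (V1 V2 : Finset V) (E1 E2 : Finset E) (v : V)
    (hVu : V1 ∪ V2 = Finset.univ) (hVi : V1 ∩ V2 = {v})
    (hEu : E1 ∪ E2 = Finset.univ) (hEd : Disjoint E1 E2)
    (hE1 : ∀ e ∈ E1, ∀ x ∈ G.ends e, x ∈ V1)
    (hE2 : ∀ e ∈ E2, ∀ x ∈ G.ends e, x ∈ V2)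
    (hc1 : ∀ u ∈ V1, ∀ w ∈ V1, G.Reach (fun e => if e ∈ E1 then 1 else 0) u w)
    (hc2 : ∀ u ∈ V2, ∀ w ∈ V2, G.Reach (fun e => if e ∈ E2 then 1 else 0) u w) :
    opt2ECrel G Finset.univ Finset.univ
      = opt2ECrel G V1 E1 + opt2ECrel G V2 E2 := by
  classical
  have hvmem : v ∈ V1 ∩ V2 := by rw [hVi]; exact Finset.mem_singleton_self v
  have hv1 : v ∈ V1 := (Finset.mem_inter.mp hvmem).1
  have hv2 : v ∈ V2 := (Finset.mem_inter.mp hvmem).2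
  have hE2' : ∀ e, e ∉ E1 → e ∈ E2 := by
    intro e he
    have h := Finset.mem_univ e
    rw [← hEu] at h
    rcases Finset.mem_union.mp h with h | h
    · exact absurd h he
    · exact h
  have hE1' : ∀ e, e ∉ E2 → e ∈ E1 := by
    intro e he
    have h := Finset.mem_univ e
    rw [← hEu] at h
    rcases Finset.mem_union.mp h with h | h
    · exact h
    · exact absurd h he
  have hnot12 : ∀ e, e ∈ E1 → e ∉ E2 := fun e he => Finset.disjoint_left.mp hEd he
  have hVu' : ∀ x : V, x ∈ V1 ∨ x ∈ V2 := by
    intro x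
    have h := Finset.mem_univ x
    rw [← hVu] at h
    exact Finset.mem_union.mp h
  -- degenerate case V1 = {v}
  by_cases h1 : 2 ≤ V1.card
  · by_cases h2 : 2 ≤ V2.card
    · -- main case
      have hVi' : V2 ∩ V1 = {v} := by rw [Finset.inter_comm]; exact hVi
      -- projections
      have hproj1 : ∀ (m : E → ℕ) (u w : V), G.Reach m u w → w ∈ V1 → u ∈ V1 →
          G.Reach (fun e => if e ∈ E1 then m e else 0) u w := fun m u w hr hw hu =>
        (reach_project G hVi hE1 (fun e he => hE2 e (hE2' e he)) m hr hw).1 hu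
      have hproj2 : ∀ (m : E → ℕ) (u w : V), G.Reach m u w → w ∈ V2 → u ∈ V2 →
          G.Reach (fun e => if e ∈ E2 then m e else 0) u w := fun m u w hr hw hu =>
        (reach_project G hVi' hE2 (fun e he => hE1 e (hE1' e he)) m hr hw).1 hu
      -- the three feasible sets
      set S0 := {n | ∃ m : E → ℕ, Sub2 m ∧ (∀ e ∉ (Finset.univ : Finset E), m e = 0) ∧
        2 ≤ (Finset.univ : Finset V).card ∧
        (∀ u ∈ (Finset.univ : Finset V), ∀ w ∈ (Finset.univ : Finset V), G.Reach m u w) ∧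
        (∀ e, 1 ≤ m e → ∀ u ∈ (Finset.univ : Finset V), ∀ w ∈ (Finset.univ : Finset V),
          G.Reach (Function.update m e (m e - 1)) u w) ∧ size m = n} with hS0
      set S1 := {n | ∃ m : E → ℕ, Sub2 m ∧ (∀ e ∉ E1, m e = 0) ∧ 2 ≤ V1.card ∧
        (∀ u ∈ V1, ∀ w ∈ V1, G.Reach m u w) ∧
        (∀ e, 1 ≤ m e → ∀ u ∈ V1, ∀ w ∈ V1, G.Reach (Function.update m e (m e - 1)) u w) ∧
        size m = n} with hS1
      set S2 := {n | ∃ m : E → ℕ, Sub2 m ∧ (∀ e ∉ E2, m e = 0) ∧ 2 ≤ V2.card ∧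
        (∀ u ∈ V2, ∀ w ∈ V2, G.Reach m u w) ∧
        (∀ e, 1 ≤ m e → ∀ u ∈ V2, ∀ w ∈ V2, G.Reach (Function.update m e (m e - 1)) u w) ∧
        size m = n} with hS2
      have hopt0 : opt2ECrel G Finset.univ Finset.univ = sInf S0 := rfl
      have hopt1 : opt2ECrel G V1 E1 = sInf S1 := rfl
      have hopt2 : opt2ECrel G V2 E2 = sInf S2 := rfl
      -- combination
      have hcomb : ∀ n1 ∈ S1, ∀ n2 ∈ S2, n1 + n2 ∈ S0 := by
        rintro n1 ⟨m1, hsub1, hsupp1, -, hconn1, hbr1, hsz1⟩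
          n2 ⟨m2, hsub2, hsupp2, -, hconn2, hbr2, hsz2⟩
        refine ⟨fun e => m1 e + m2 e, ?_, fun e he => absurd (Finset.mem_univ e) he,
          le_trans h1 (Finset.card_le_card (Finset.subset_univ V1)), ?_, ?_, ?_⟩
        · intro e
          show m1 e + m2 e ≤ 2
          by_cases he : e ∈ E1
          · have ha := hsub1 e; have hb := hsupp2 e (hnot12 e he); omega
          · have ha := hsub2 e; have hb := hsupp1 e he; omega
        · -- connectivity
          intro u _ w _
          have huv : G.Reach (fun e => m1 e + m2 e) u v := by
            rcases hVu' u with hu | hu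
            · exact reach_mono G (fun e => Nat.le_add_right _ _) (hconn1 u hu v hv1)
            · exact reach_mono G (fun e => Nat.le_add_left _ _) (hconn2 u hu v hv2)
          have hvw : G.Reach (fun e => m1 e + m2 e) v w := by
            rcases hVu' w with hw | hw
            · exact reach_mono G (fun e => Nat.le_add_right _ _) (hconn1 v hv1 w hw)
            · exact reach_mono G (fun e => Nat.le_add_left _ _) (hconn2 v hv2 w hw)
          exact huv.trans hvw
        · -- bridge condition
          intro e he u _ w _
          by_cases heE : e ∈ E1
          · have hm2e : m2 e = 0 := hsupp2 e (hnot12 e heE)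
            have he' : 1 ≤ m1 e + m2 e := he
            have hm1e : 1 ≤ m1 e := by omega
            have hA : ∀ e', Function.update m1 e (m1 e - 1) e' ≤
                Function.update (fun e' => m1 e' + m2 e') e (m1 e + m2 e - 1) e' := by
              intro e'
              rcases eq_or_ne e' e with rfl | hne
              · simp; omega
              · simp [Function.update_apply, hne]
            have hB : ∀ e', m2 e' ≤
                Function.update (fun e' => m1 e' + m2 e') e (m1 e + m2 e - 1) e' := by
              intro e'
              rcases eq_or_ne e' e with rfl | hne
              · simp [hm2e]
              · simp [Function.update_apply, hne]
            have huv : G.Reach (Function.update (fun e' => m1 e' + m2 e') e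
                (m1 e + m2 e - 1)) u v := by
              rcases hVu' u with hu | hu
              · exact reach_mono G hA (hbr1 e hm1e u hu v hv1)
              · exact reach_mono G hB (hconn2 u hu v hv2)
            have hvw : G.Reach (Function.update (fun e' => m1 e' + m2 e') e
                (m1 e + m2 e - 1)) v w := by
              rcases hVu' w with hw | hw
              · exact reach_mono G hA (hbr1 e hm1e v hv1 w hw)
              · exact reach_mono G hB (hconn2 v hv2 w hw)
            exact huv.trans hvw
          · have hm1e : m1 e = 0 := hsupp1 e heE
            have he' : 1 ≤ m1 e + m2 e := he
            have hm2e : 1 ≤ m2 e := by omega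
            have hA : ∀ e', Function.update m2 e (m2 e - 1) e' ≤
                Function.update (fun e' => m1 e' + m2 e') e (m1 e + m2 e - 1) e' := by
              intro e'
              rcases eq_or_ne e' e with rfl | hne
              · simp; omega
              · simp [Function.update_apply, hne]
            have hB : ∀ e', m1 e' ≤
                Function.update (fun e' => m1 e' + m2 e') e (m1 e + m2 e - 1) e' := by
              intro e'
              rcases eq_or_ne e' e with rfl | hne
              · simp [hm1e]
              · simp [Function.update_apply, hne]
            have huv : G.Reach (Function.update (fun e' => m1 e' + m2 e') e
                (m1 e + m2 e - 1)) u v := by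
              rcases hVu' u with hu | hu
              · exact reach_mono G hB (hconn1 u hu v hv1)
              · exact reach_mono G hA (hbr2 e hm2e u hu v hv2)
            have hvw : G.Reach (Function.update (fun e' => m1 e' + m2 e') e
                (m1 e + m2 e - 1)) v w := by
              rcases hVu' w with hw | hw
              · exact reach_mono G hB (hconn1 v hv1 w hw)
              · exact reach_mono G hA (hbr2 e hm2e v hv2 w hw)
            exact huv.trans hvw
        · -- size
          rw [← hsz1, ← hsz2]
          unfold MGraph.size
          exact Finset.sum_add_distrib
      -- decomposition
      have hsplit : ∀ n ∈ S0, ∃ n1 ∈ S1, ∃ n2 ∈ S2, n = n1 + n2 := by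
        rintro n ⟨m, hsub, -, -, hconn, hbr, hsz⟩
        set m1 : E → ℕ := fun e => if e ∈ E1 then m e else 0 with hm1
        set m2 : E → ℕ := fun e => if e ∈ E2 then m e else 0 with hm2
        have hmem1 : size m1 ∈ S1 := by
          refine ⟨m1, ?_, ?_, h1, ?_, ?_, rfl⟩
          · intro e; by_cases he : e ∈ E1 <;> simp [hm1, he, hsub e]
          · intro e he; simp [hm1, he]
          · intro u hu w hw
            exact hproj1 m u w (hconn u (Finset.mem_univ u) w (Finset.mem_univ w)) hw hu
          · intro e he u hu w hw
            have heE : e ∈ E1 := by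
              by_contra h; simp [hm1, h] at he
            have hme : 1 ≤ m e := by simpa [hm1, heE] using he
            have hb := hbr e hme u (Finset.mem_univ u) w (Finset.mem_univ w)
            have hp := hproj1 (Function.update m e (m e - 1)) u w hb hw hu
            have heq : (fun e' => if e' ∈ E1 then Function.update m e (m e - 1) e' else 0)
                = Function.update m1 e (m1 e - 1) := by
              funext e'
              rcases eq_or_ne e' e with rfl | hne
              · simp [hm1, heE]
              · simp [Function.update_apply, hne, hm1]
            rwa [heq] at hp
        have hmem2 : size m2 ∈ S2 := by
          refine ⟨m2, ?_, ?_, h2, ?_, ?_, rfl⟩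
          · intro e; by_cases he : e ∈ E2 <;> simp [hm2, he, hsub e]
          · intro e he; simp [hm2, he]
          · intro u hu w hw
            exact hproj2 m u w (hconn u (Finset.mem_univ u) w (Finset.mem_univ w)) hw hu
          · intro e he u hu w hw
            have heE : e ∈ E2 := by
              by_contra h; simp [hm2, h] at he
            have hme : 1 ≤ m e := by simpa [hm2, heE] using he
            have hb := hbr e hme u (Finset.mem_univ u) w (Finset.mem_univ w)
            have hp := hproj2 (Function.update m e (m e - 1)) u w hb hw hu
            have heq : (fun e' => if e' ∈ E2 then Function.update m e (m e - 1) e' else 0)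
                = Function.update m2 e (m2 e - 1) := by
              funext e'
              rcases eq_or_ne e' e with rfl | hne
              · simp [hm2, heE]
              · simp [Function.update_apply, hne, hm2]
            rwa [heq] at hp
        refine ⟨size m1, hmem1, size m2, hmem2, ?_⟩
        rw [← hsz]
        unfold MGraph.size
        rw [← Finset.sum_add_distrib]
        refine Finset.sum_congr rfl fun e _ => ?_
        by_cases he : e ∈ E1
        · simp [hm1, hm2, he, hnot12 e he]
        · simp [hm1, hm2, he, hE2' e he]
      -- nonemptiness of S1 and S2
      have hne1 : S1.Nonempty := by
        refine ⟨size (fun e => if e ∈ E1 then 2 else 0),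
          fun e => if e ∈ E1 then 2 else 0, ?_, ?_, h1, ?_, ?_, rfl⟩
        · intro e; by_cases he : e ∈ E1 <;> simp [he]
        · intro e he; simp [he]
        · intro u hu w hw
          refine reach_mono G (fun e => ?_) (hc1 u hu w hw)
          by_cases he : e ∈ E1 <;> simp [he]
        · intro e he u hu w hw
          refine reach_mono G (fun e' => ?_) (hc1 u hu w hw)
          rcases eq_or_ne e' e with rfl | hne
          · have he' : e' ∈ E1 := by by_contra h; simp [h] at he
            simp [he']
          · simp only [Function.update_apply, if_neg hne]
            by_cases h : e' ∈ E1 <;> simp [h]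
      have hne2 : S2.Nonempty := by
        refine ⟨size (fun e => if e ∈ E2 then 2 else 0),
          fun e => if e ∈ E2 then 2 else 0, ?_, ?_, h2, ?_, ?_, rfl⟩
        · intro e; by_cases he : e ∈ E2 <;> simp [he]
        · intro e he; simp [he]
        · intro u hu w hw
          refine reach_mono G (fun e => ?_) (hc2 u hu w hw)
          by_cases he : e ∈ E2 <;> simp [he]
        · intro e he u hu w hw
          refine reach_mono G (fun e' => ?_) (hc2 u hu w hw)
          rcases eq_or_ne e' e with rfl | hne
          · have he' : e' ∈ E2 := by by_contra h; simp [h] at he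
            simp [he']
          · simp only [Function.update_apply, if_neg hne]
            by_cases h : e' ∈ E2 <;> simp [h]
      have hmem1 := Nat.sInf_mem hne1
      have hmem2 := Nat.sInf_mem hne2
      have hS0ne : S0.Nonempty := ⟨_, hcomb _ hmem1 _ hmem2⟩
      rw [hopt0, hopt1, hopt2]
      apply le_antisymm
      · exact Nat.sInf_le (hcomb _ hmem1 _ hmem2)
      · obtain ⟨n1, hn1, n2, hn2, heq⟩ := hsplit _ (Nat.sInf_mem hS0ne)
        rw [heq]
        exact Nat.add_le_add (Nat.sInf_le hn1) (Nat.sInf_le hn2)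
    · -- V2 = {v}
      push_neg at h2
      have hV2 : V2 = {v} := by
        apply Finset.eq_singleton_iff_unique_mem.mpr
        exact ⟨hv2, fun x hx => Finset.card_le_one.mp (by omega) x hx v hv2⟩
      have hE2e : E2 = ∅ := by
        rw [Finset.eq_empty_iff_forall_notMem]
        intro e he
        obtain ⟨⟨a, b⟩, hab⟩ := Quot.exists_rep (G.ends e)
        have hends : G.ends e = s(a, b) := hab.symm
        have ha : a ∈ V2 := hE2 e he a (by rw [hends]; exact Sym2.mem_mk_left a b)
        have hb : b ∈ V2 := hE2 e he b (by rw [hends]; exact Sym2.mem_mk_right a b)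
        rw [hV2, Finset.mem_singleton] at ha hb
        exact G.not_loop e (by rw [hends, ha, hb]; exact Sym2.mk_isDiag_iff.mpr rfl)
      have hE1u : E1 = Finset.univ := by
        rw [hE2e, Finset.union_empty] at hEu; exact hEu
      have hV1u : V1 = Finset.univ := by
        apply Finset.eq_univ_iff_forall.mpr
        intro x
        rcases hVu' x with h | h
        · exact h
        · rw [hV2, Finset.mem_singleton] at h; exact h ▸ hv1
      have hz : opt2ECrel G V2 E2 = 0 := by
        unfold MGraph.opt2ECrel
        convert Nat.sInf_empty
        rw [Set.eq_empty_iff_forall_notMem]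
        rintro n ⟨m, -, -, hcard, -⟩
        rw [hV2, Finset.card_singleton] at hcard
        omega
      rw [hz, hV1u, hE1u, Nat.add_zero]
  · -- V1 = {v}
    push_neg at h1
    have hV1 : V1 = {v} := by
      apply Finset.eq_singleton_iff_unique_mem.mpr
      exact ⟨hv1, fun x hx => Finset.card_le_one.mp (by omega) x hx v hv1⟩
    have hE1e : E1 = ∅ := by
      rw [Finset.eq_empty_iff_forall_notMem]
      intro e he
      obtain ⟨⟨a, b⟩, hab⟩ := Quot.exists_rep (G.ends e)
      have hends : G.ends e = s(a, b) := hab.symm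
      have ha : a ∈ V1 := hE1 e he a (by rw [hends]; exact Sym2.mem_mk_left a b)
      have hb : b ∈ V1 := hE1 e he b (by rw [hends]; exact Sym2.mem_mk_right a b)
      rw [hV1, Finset.mem_singleton] at ha hb
      exact G.not_loop e (by rw [hends, ha, hb]; exact Sym2.mk_isDiag_iff.mpr rfl)
    have hE2u : E2 = Finset.univ := by
      rw [hE1e, Finset.empty_union] at hEu; exact hEu
    have hV2u : V2 = Finset.univ := by
      apply Finset.eq_univ_iff_forall.mpr
      intro x
      rcases hVu' x with h | h
      · rw [hV1, Finset.mem_singleton] at h; exact h ▸ hv2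
      · exact h
    have hz : opt2ECrel G V1 E1 = 0 := by
      unfold MGraph.opt2ECrel
      convert Nat.sInf_empty
      rw [Set.eq_empty_iff_forall_notMem]
      rintro n ⟨m, -, -, hcard, -⟩
      rw [hV1, Finset.card_singleton] at hcard
      omega
    rw [hz, hV2u, hE2u, Nat.zero_add]
end MGraph
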